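/- arXiv:2210.11427 — 7 statements merged into one kernel-verified Lean document; each statement's English description precedes it below -/
import Mathlib

section
/- Let d ≥ 1, let 0 < α' ≤ 1 and 0 < α ≤ 1, and let x, ε ∈ ℝ^d. Define the DDIM update x' = √α' · (x − √(1−α) ε)/√α + √(1−α') ε. Then, in the rescaled variables u = x/√α, u' = x'/√α' and noise levels τ = √(1/α − 1), τ' = √(1/α' − 1), the update satisfies u' = u + (τ' − τ) ε; i.e., one DDIM sampling step is exactly one Euler step of size τ' − τ for the ODE du = ε dτ. -/
/-- One DDIM sampling step is exactly one Euler step of size τ' − τ for the ODE du = ε dτ: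
in rescaled variables u = x/√α, u' = x'/√α' and noise levels τ = √(1/α − 1),
τ' = √(1/α' − 1), the DDIM update x' = √α'·(x − √(1−α) ε)/√α + √(1−α') ε
satisfies u' = u + (τ' − τ) • ε. -/
theorem ddim_step_is_euler_step
    (d : ℕ) (hd : 1 ≤ d)
    (α α' : ℝ) (hα : 0 < α) (hα1 : α ≤ 1) (hα' : 0 < α') (hα'1 : α' ≤ 1)
    (x ε x' : EuclideanSpace ℝ (Fin d))
    (hx' : x' = Real.sqrt α' • ((Real.sqrt α)⁻¹ • (x - Real.sqrt (1 - α) • ε))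
              + Real.sqrt (1 - α') • ε) :
    (Real.sqrt α')⁻¹ • x'
      = (Real.sqrt α)⁻¹ • x
        + (Real.sqrt (1 / α' - 1) - Real.sqrt (1 / α - 1)) • ε := by
  have h1 : Real.sqrt (1 / α - 1) = Real.sqrt (1 - α) / Real.sqrt α := by
    rw [show 1/α - 1 = (1-α)/α by field_simp, Real.sqrt_div (by linarith)]
  have h2 : Real.sqrt (1 / α' - 1) = Real.sqrt (1 - α') / Real.sqrt α' := by
    rw [show 1/α' - 1 = (1-α')/α' by field_simp, Real.sqrt_div (by linarith)]
  have hsa : Real.sqrt α ≠ 0 := by positivity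
  have hsa' : Real.sqrt α' ≠ 0 := by positivity
  subst hx'
  rw [h1, h2]
  match_scalars <;> field_simp <;> ring
end

section
/- Let τ ≥ 0, κ ≥ 0, K ≥ 0, and let w : [0,τ] → ℝ be continuous and nonnegative. Suppose that for every t ∈ [0,τ], w(t) ≤ κ(τ − t) + ∫_t^τ (K/√(1+σ²)) w(σ) dσ. Then w(0) ≤ κ τ (τ + √(τ² + 1))^K. -/
open Set intervalIntegral MeasureTheory


/-- Reversed-time Grönwall inequality with kernel `K/√(1+σ²)` (integral form):
if a continuous nonnegative `w` on `[0,τ]` satisfies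
`w t ≤ κ (τ − t) + ∫_t^τ (K/√(1+σ²)) w σ dσ` for all `t ∈ [0,τ]`, then
`w 0 ≤ κ τ (τ + √(τ²+1))^K`. -/
theorem gronwall_reverse_integral_form
    (τ κ K : ℝ) (hτ : 0 ≤ τ) (hκ : 0 ≤ κ) (hK : 0 ≤ K)
    (w : ℝ → ℝ)
    (hw : ContinuousOn w (Set.Icc 0 τ))
    (hnn : ∀ t ∈ Set.Icc (0 : ℝ) τ, 0 ≤ w t)
    (hineq : ∀ t ∈ Set.Icc (0 : ℝ) τ,
      w t ≤ κ * (τ - t) + ∫ σ in t..τ, (K / Real.sqrt (1 + σ ^ 2)) * w σ) :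
    w 0 ≤ κ * τ * (τ + Real.sqrt (τ ^ 2 + 1)) ^ K := by
  set k : ℝ → ℝ := fun σ => K / Real.sqrt (1 + σ ^ 2) with hkdef
  have hsq : ∀ σ : ℝ, (0:ℝ) < Real.sqrt (1 + σ ^ 2) := fun σ =>
    Real.sqrt_pos.2 (by positivity)
  have hkcont : Continuous k :=
    continuous_const.div (by fun_prop) fun σ => (hsq σ).ne'
  have hknn : ∀ σ, 0 ≤ k σ := fun σ => div_nonneg hK (hsq σ).le
  set f : ℝ → ℝ := fun σ => k σ * w σ with hfdef
  have hfcont : ContinuousOn f (Icc 0 τ) := (hkcont.continuousOn).mul hw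
  have hfint : IntegrableOn f (uIcc 0 τ) := by
    rw [uIcc_of_le hτ]
    exact hfcont.integrableOn_Icc
  set F : ℝ → ℝ := fun t => ∫ σ in t..τ, f σ with hFdef
  have hFcont : ContinuousOn F (Icc 0 τ) := by
    have := intervalIntegral.continuousOn_primitive_interval_left (a := 0) (b := τ)
      (f := f) (μ := volume) hfint
    rwa [uIcc_of_le hτ] at this
  have hFderiv : ∀ x ∈ Ioo (0:ℝ) τ, HasDerivAt F (-(f x)) x := by
    intro x hx
    have hxI : Icc (0:ℝ) τ ∈ nhds x := Icc_mem_nhds hx.1 hx.2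
    have hcf : ContinuousAt f x := hfcont.continuousAt hxI
    have hint : IntervalIntegrable f volume τ x := by
      apply ContinuousOn.intervalIntegrable
      apply hfcont.mono
      rw [uIcc_comm]
      exact uIcc_subset_Icc ⟨hx.1.le, hx.2.le⟩ (right_mem_Icc.2 hτ)
    have hmeas : StronglyMeasurableAtFilter f (nhds x) volume :=
      ContinuousOn.stronglyMeasurableAtFilter isOpen_Ioo
        (hfcont.mono Ioo_subset_Icc_self) x hx
    have h1 : HasDerivAt (fun t => ∫ σ in τ..t, f σ) (f x) x :=
      intervalIntegral.integral_hasDerivAt_right hint hmeas hcf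
    have h2 : HasDerivAt (fun t => -∫ σ in τ..t, f σ) (-(f x)) x := h1.neg
    have heq : F = fun t => -∫ σ in τ..t, f σ := by
      funext t
      rw [hFdef]
      simp [intervalIntegral.integral_symm t τ]
    rw [heq]; exact h2
  set A : ℝ → ℝ := fun t => K * (Real.arsinh τ - Real.arsinh t) with hAdef
  have hAderiv : ∀ x : ℝ, HasDerivAt A (-(k x)) x := by
    intro x
    have h := ((Real.hasDerivAt_arsinh x).const_sub (Real.arsinh τ)).const_mul K
    refine h.congr_deriv ?_
    rw [hkdef]
    field_simp
  set G : ℝ → ℝ := fun t => (κ * τ + F t) * Real.exp (-(A t)) with hGdef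
  have hGderiv : ∀ x ∈ Ioo (0:ℝ) τ,
      HasDerivAt G ((-(f x) + (κ * τ + F x) * k x) * Real.exp (-(A x))) x := by
    intro x hx
    have h1 : HasDerivAt (fun t => κ * τ + F t) (-(f x)) x := (hFderiv x hx).const_add _
    have h2 : HasDerivAt (fun t => Real.exp (-(A t))) (k x * Real.exp (-(A x))) x := by
      have := ((hAderiv x).neg).exp
      simpa [mul_comm] using this
    have h3 := h1.mul h2
    refine h3.congr_deriv ?_
    ring
  have hGcont : ContinuousOn G (Icc 0 τ) := by
    apply (continuousOn_const.add hFcont).mul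
    exact (Real.continuous_exp.comp
      ((continuous_const.mul (continuous_const.sub Real.continuous_arsinh)).neg)).continuousOn
  have hGmono : MonotoneOn G (Icc 0 τ) := by
    have hint : interior (Icc (0:ℝ) τ) = Ioo 0 τ := interior_Icc
    apply monotoneOn_of_deriv_nonneg (convex_Icc 0 τ) hGcont
    · rw [hint]
      intro x hx
      exact (hGderiv x hx).differentiableAt.differentiableWithinAt
    · rw [hint]
      intro x hx
      rw [(hGderiv x hx).deriv]
      have hxmem : x ∈ Icc (0:ℝ) τ := Ioo_subset_Icc_self hx
      have hwle : w x ≤ κ * τ + F x := by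
        have := hineq x hxmem
        have h2 : κ * (τ - x) ≤ κ * τ := by nlinarith [hx.1]
        rw [hFdef]
        simp only
        linarith
      have : f x ≤ (κ * τ + F x) * k x := by
        rw [hfdef]
        simp only
        rw [mul_comm (κ * τ + F x) (k x)]
        exact mul_le_mul_of_nonneg_left hwle (hknn x)
      have := Real.exp_pos (-(A x))
      nlinarith
  have hG0 : G 0 ≤ G τ := hGmono (left_mem_Icc.2 hτ) (right_mem_Icc.2 hτ) hτ
  have hFτ : F τ = 0 := by rw [hFdef]; simp
  have hAτ : A τ = 0 := by rw [hAdef]; simp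
  have hA0 : A 0 = K * Real.arsinh τ := by rw [hAdef]; simp
  have hGτ : G τ = κ * τ := by rw [hGdef]; simp [hFτ, hAτ]
  -- from G 0 ≤ κ τ : (κτ + F 0) ≤ κτ * exp (A 0)
  have hkey : κ * τ + F 0 ≤ κ * τ * Real.exp (A 0) := by
    have h1 : (κ * τ + F 0) * Real.exp (-(A 0)) ≤ κ * τ := by
      have h0 := hG0
      rw [hGτ] at h0
      exact h0
    have h2 := Real.exp_pos (A 0)
    calc κ * τ + F 0 = (κ * τ + F 0) * Real.exp (-(A 0)) * Real.exp (A 0) := by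
          rw [mul_assoc, ← Real.exp_add]; simp
      _ ≤ κ * τ * Real.exp (A 0) := by
          exact mul_le_mul_of_nonneg_right h1 h2.le
  have hw0 : w 0 ≤ κ * τ + F 0 := by
    have := hineq 0 (left_mem_Icc.2 hτ)
    simpa using this
  have hrpow : κ * τ * Real.exp (A 0) = κ * τ * (τ + Real.sqrt (τ ^ 2 + 1)) ^ K := by
    rw [hA0]
    congr 1
    have hpos : (0:ℝ) < τ + Real.sqrt (τ ^ 2 + 1) := by positivity
    rw [Real.rpow_def_of_pos hpos]
    congr 1
    rw [mul_comm]
    congr 1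
    rw [Real.arsinh, add_comm (1:ℝ) (τ^2)]
  linarith [hw0, hkey, hrpow.le, hrpow.ge]
end

section
/- Let τ ≥ 0, κ ≥ 0, K ≥ 0, and let w : [0,τ] → ℝ be differentiable with w(σ) ≥ 0 for all σ, w(τ) = 0, and −w'(σ) ≤ κ + (K/√(1+σ²)) w(σ) for all σ ∈ [0,τ]. Then w(0) ≤ κ τ (τ + √(τ² + 1))^K. -/
/-- Reversed-time Grönwall inequality with kernel `K/√(1+σ²)` (differential form):
if `w` is differentiable and nonnegative on `[0,τ]`, `w τ = 0`, and
`−w'(σ) ≤ κ + (K/√(1+σ²)) w σ` for all `σ ∈ [0,τ]`, then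
`w 0 ≤ κ τ (τ + √(τ²+1))^K`. -/
theorem gronwall_reverse_differential_form
    (τ κ K : ℝ) (hτ : 0 ≤ τ) (hκ : 0 ≤ κ) (hK : 0 ≤ K)
    (w w' : ℝ → ℝ)
    (hderiv : ∀ σ ∈ Set.Icc (0 : ℝ) τ, HasDerivAt w (w' σ) σ)
    (hnn : ∀ σ ∈ Set.Icc (0 : ℝ) τ, 0 ≤ w σ)
    (hwτ : w τ = 0)
    (hineq : ∀ σ ∈ Set.Icc (0 : ℝ) τ, -w' σ ≤ κ + (K / Real.sqrt (1 + σ ^ 2)) * w σ) :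
    w 0 ≤ κ * τ * (τ + Real.sqrt (τ ^ 2 + 1)) ^ K := by
  set E : ℝ → ℝ := fun σ => (σ + Real.sqrt (σ ^ 2 + 1)) ^ K with hE
  set g : ℝ → ℝ := fun σ => E σ * (w σ + κ * σ) with hg
  set g' : ℝ → ℝ := fun σ =>
    K / Real.sqrt (σ ^ 2 + 1) * E σ * (w σ + κ * σ) + E σ * (w' σ + κ) with hg'
  have hspos : ∀ σ : ℝ, 0 < Real.sqrt (σ ^ 2 + 1) := fun σ =>
    Real.sqrt_pos.2 (by positivity)
  have hBpos : ∀ σ : ℝ, 0 < σ + Real.sqrt (σ ^ 2 + 1) := by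
    intro σ
    nlinarith [hspos σ, Real.sq_sqrt (by positivity : (0:ℝ) ≤ σ ^ 2 + 1), abs_nonneg σ,
      sq_abs σ, neg_abs_le σ]
  have hEderiv : ∀ σ : ℝ, HasDerivAt E (K / Real.sqrt (σ ^ 2 + 1) * E σ) σ := by
    intro σ
    have h1 : HasDerivAt (fun x : ℝ => x ^ 2 + 1) (2 * σ) σ := by
      simpa using (hasDerivAt_pow 2 σ).add_const 1
    have h2 : HasDerivAt (fun x : ℝ => Real.sqrt (x ^ 2 + 1))
        (2 * σ / (2 * Real.sqrt (σ ^ 2 + 1))) σ := by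
      simpa [div_eq_mul_inv, mul_comm, Function.comp_def] using
        (Real.hasDerivAt_sqrt (by positivity : (σ:ℝ) ^ 2 + 1 ≠ 0)).comp σ h1
    have hB : HasDerivAt (fun x : ℝ => x + Real.sqrt (x ^ 2 + 1))
        (1 + 2 * σ / (2 * Real.sqrt (σ ^ 2 + 1))) σ := (hasDerivAt_id σ).add h2
    have h3 := hB.rpow_const (p := K) (Or.inl (ne_of_gt (hBpos σ)))
    convert h3 using 1
    have hs := (hspos σ).ne'
    have hsq : Real.sqrt (σ ^ 2 + 1) * Real.sqrt (σ ^ 2 + 1) = σ ^ 2 + 1 :=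
      Real.mul_self_sqrt (by positivity)
    have hpow : (σ + Real.sqrt (σ ^ 2 + 1)) ^ (K - 1) * (σ + Real.sqrt (σ ^ 2 + 1))
        = (σ + Real.sqrt (σ ^ 2 + 1)) ^ K := by
      rw [← Real.rpow_add_one (ne_of_gt (hBpos σ))]; ring_nf
    have : 1 + 2 * σ / (2 * Real.sqrt (σ ^ 2 + 1))
        = (σ + Real.sqrt (σ ^ 2 + 1)) / Real.sqrt (σ ^ 2 + 1) := by
      field_simp; ring
    rw [this, hE]
    field_simp
    rw [mul_comm K, mul_assoc, ← hpow]
    ring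
  have hgderiv : ∀ σ ∈ Set.Icc (0:ℝ) τ, HasDerivAt g (g' σ) σ := by
    intro σ hσ
    have hw2 : HasDerivAt (fun x => w x + κ * x) (w' σ + κ) σ := by
      simpa [Pi.add_def] using (hderiv σ hσ).add ((hasDerivAt_id σ).const_mul κ)
    exact (hEderiv σ).mul hw2
  have hmono : MonotoneOn g (Set.Icc 0 τ) := by
    apply monotoneOn_of_deriv_nonneg (convex_Icc 0 τ)
    · exact fun σ hσ => (hgderiv σ hσ).continuousAt.continuousWithinAt
    · rw [interior_Icc]
      exact fun σ hσ =>
        (hgderiv σ (Set.Ioo_subset_Icc_self hσ)).differentiableAt.differentiableWithinAt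
    · rw [interior_Icc]
      intro σ hσ
      have hσ' : σ ∈ Set.Icc (0:ℝ) τ := Set.Ioo_subset_Icc_self hσ
      rw [(hgderiv σ hσ').deriv]
      have hEnn : 0 ≤ E σ := le_of_lt (Real.rpow_pos_of_pos (hBpos σ) K)
      have h1 := hineq σ hσ'
      have h2 := hnn σ hσ'
      have hs := hspos σ
      have hKs : 0 ≤ K / Real.sqrt (σ ^ 2 + 1) := by positivity
      have hcomm : Real.sqrt (1 + σ ^ 2) = Real.sqrt (σ ^ 2 + 1) := by ring_nf
      rw [hcomm] at h1
      have key : -(K / Real.sqrt (σ ^ 2 + 1) * w σ) ≤ w' σ + κ := by linarith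
      have : 0 ≤ K / Real.sqrt (σ ^ 2 + 1) * E σ * (κ * σ) := by
        have := hσ.1.le
        positivity
      simp only [hg']
      nlinarith [mul_le_mul_of_nonneg_left key hEnn, this,
        mul_nonneg (mul_nonneg hKs hEnn) h2]
  have h0 : g 0 = w 0 := by
    simp [hg, hE]
  have hτ' : g τ = E τ * (κ * τ) := by simp [hg, hwτ]
  have := hmono (Set.left_mem_Icc.2 hτ) (Set.right_mem_Icc.2 hτ) hτ
  rw [h0, hτ'] at this
  calc w 0 ≤ E τ * (κ * τ) := this
    _ = κ * τ * (τ + Real.sqrt (τ ^ 2 + 1)) ^ K := by rw [hE]; ring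
end

section
/- Let d ≥ 1, τ ≥ 0, K₁ ≥ 0, κ₂ ≥ 0. Let g : ℝ^d × [0,τ] → ℝ^d be such that for every σ ∈ [0,τ], the map x ↦ g(x,σ) is (K₁/√(1+σ²))-Lipschitz. Let u, v : [0,τ] → ℝ^d be differentiable with u(τ) = v(τ), v'(σ) = g(v(σ), σ) for all σ, and ‖u'(σ) − g(u(σ), σ)‖ ≤ κ₂ for all σ ∈ [0,τ]. Then ‖u(0) − v(0)‖ ≤ κ₂ τ (τ + √(τ² + 1))^{K₁}. -/
/-- DiffEdit ODE-perturbation bound: if `v` solves `v' = g(v, σ)` where `x ↦ g(x,σ)` is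
`(K₁/√(1+σ²))`-Lipschitz, `u` is an approximate solution with defect
`‖u'(σ) − g(u(σ),σ)‖ ≤ κ₂`, and `u τ = v τ`, then
`‖u 0 − v 0‖ ≤ κ₂ τ (τ + √(τ²+1))^{K₁}`. -/
theorem diffedit_ode_perturbation_bound
    (d : ℕ) (hd : 1 ≤ d) (τ K₁ κ₂ : ℝ) (hτ : 0 ≤ τ) (hK₁ : 0 ≤ K₁) (hκ₂ : 0 ≤ κ₂)
    (g : EuclideanSpace ℝ (Fin d) → ℝ → EuclideanSpace ℝ (Fin d))
    (hg : ∀ σ ∈ Set.Icc (0 : ℝ) τ, ∀ x y : EuclideanSpace ℝ (Fin d),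
      ‖g x σ - g y σ‖ ≤ (K₁ / Real.sqrt (1 + σ ^ 2)) * ‖x - y‖)
    (u v : ℝ → EuclideanSpace ℝ (Fin d))
    (u' : ℝ → EuclideanSpace ℝ (Fin d))
    (hu : ∀ σ ∈ Set.Icc (0 : ℝ) τ, HasDerivAt u (u' σ) σ)
    (hv : ∀ σ ∈ Set.Icc (0 : ℝ) τ, HasDerivAt v (g (v σ) σ) σ)
    (hend : u τ = v τ)
    (hdefect : ∀ σ ∈ Set.Icc (0 : ℝ) τ, ‖u' σ - g (u σ) σ‖ ≤ κ₂) :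
    ‖u 0 - v 0‖ ≤ κ₂ * τ * (τ + Real.sqrt (τ ^ 2 + 1)) ^ K₁ := by
  -- trivial case τ = 0
  rcases eq_or_lt_of_le hτ with hτ0 | hτpos
  · subst hτ0
    simp [hend.symm ▸ hend, hend]
  -- positivity of the rpow factor
  have hbase : (0 : ℝ) < τ + Real.sqrt (τ ^ 2 + 1) := by positivity
  have hP : (0 : ℝ) < (τ + Real.sqrt (τ ^ 2 + 1)) ^ K₁ := Real.rpow_pos_of_pos hbase K₁
  set P : ℝ := (τ + Real.sqrt (τ ^ 2 + 1)) ^ K₁ with hPdef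
  -- key ε-estimate
  have key : ∀ ε > (0:ℝ), ‖u 0 - v 0‖ ≤ (κ₂ + ε) * τ * P := by
    intro ε hε
    set c : ℝ := κ₂ + ε with hc
    have hcpos : 0 < c := by positivity
    -- reversed time functions
    set f : ℝ → EuclideanSpace ℝ (Fin d) := fun s => u (τ - s) - v (τ - s) with hf_def
    set f' : ℝ → EuclideanSpace ℝ (Fin d) :=
      fun s => g (v (τ - s)) (τ - s) - u' (τ - s) with hf'_def
    set E : ℝ → ℝ := fun s => Real.exp (K₁ * (Real.arsinh τ - Real.arsinh (τ - s))) with hE_def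
    set B : ℝ → ℝ := fun s => c * (s * E s) with hB_def
    set B' : ℝ → ℝ :=
      fun s => c * (E s + s * (E s * (K₁ * (Real.sqrt (1 + (τ - s) ^ 2))⁻¹))) with hB'_def
    have hts : ∀ s : ℝ, HasDerivAt (fun s => τ - s) (-1 : ℝ) s := fun s => by
      simpa using (hasDerivAt_id s).const_sub τ
    have hEderiv : ∀ s : ℝ, HasDerivAt E (E s * (K₁ * (Real.sqrt (1 + (τ - s) ^ 2))⁻¹)) s := by
      intro s
      have hA : HasDerivAt (fun s => Real.arsinh (τ - s))
          (-(Real.sqrt (1 + (τ - s) ^ 2))⁻¹) s := by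
        have h := (Real.hasDerivAt_arsinh (τ - s)).comp s (hts s)
        rw [mul_neg_one] at h
        exact h
      have h1 : HasDerivAt (fun s => K₁ * (Real.arsinh τ - Real.arsinh (τ - s)))
          (K₁ * (Real.sqrt (1 + (τ - s) ^ 2))⁻¹) s := by
        simpa using ((hasDerivAt_const s (Real.arsinh τ)).sub hA).const_mul K₁
      simpa [hE_def, mul_comm] using h1.exp
    have hBderiv : ∀ s : ℝ, HasDerivAt B (B' s) s := by
      intro s
      have := ((hasDerivAt_id s).mul (hEderiv s)).const_mul c
      simpa [hB_def, hB'_def] using this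
    have hEone : ∀ s ∈ Set.Icc (0:ℝ) τ, 1 ≤ E s := by
      intro s hs
      have : Real.arsinh (τ - s) ≤ Real.arsinh τ :=
        Real.arsinh_le_arsinh.mpr (by linarith [hs.1])
      exact Real.one_le_exp (by nlinarith)
    have hmem : ∀ s ∈ Set.Icc (0:ℝ) τ, τ - s ∈ Set.Icc (0:ℝ) τ := by
      intro s hs; exact ⟨by linarith [hs.2], by linarith [hs.1]⟩
    have hfderiv : ∀ s ∈ Set.Icc (0:ℝ) τ, HasDerivAt f (f' s) s := by
      intro s hs
      have h1 := (hu (τ - s) (hmem s hs)).scomp s (hts s)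
      have h2 := (hv (τ - s) (hmem s hs)).scomp s (hts s)
      have := h1.sub h2
      refine this.congr_deriv ?_
      simp only [hf'_def]
      simp only [neg_one_smul]; abel
    have hfcont : ContinuousOn f (Set.Icc 0 τ) :=
      fun s hs => (hfderiv s hs).continuousAt.continuousWithinAt
    have ha : ‖f 0‖ ≤ B 0 := by simp [hf_def, hB_def, hend]
    have bound : ∀ s ∈ Set.Ico (0:ℝ) τ, ‖f s‖ = B s → ‖f' s‖ < B' s := by
      intro s hs hEq
      have hsIcc : s ∈ Set.Icc (0:ℝ) τ := ⟨hs.1, le_of_lt hs.2⟩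
      have hmem' := hmem s hsIcc
      set K : ℝ := K₁ / Real.sqrt (1 + (τ - s) ^ 2) with hK
      have hKnonneg : 0 ≤ K := by
        apply div_nonneg hK₁ (Real.sqrt_nonneg _)
      have h1 : ‖f' s‖ ≤ κ₂ + K * ‖f s‖ := by
        have hd1 := hdefect (τ - s) hmem'
        have hd2 := hg (τ - s) hmem' (u (τ - s)) (v (τ - s))
        have : f' s = -((u' (τ - s) - g (u (τ - s)) (τ - s)) +
            (g (u (τ - s)) (τ - s) - g (v (τ - s)) (τ - s))) := by
          simp only [hf'_def]; module
        rw [this, norm_neg]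
        calc ‖(u' (τ - s) - g (u (τ - s)) (τ - s)) +
            (g (u (τ - s)) (τ - s) - g (v (τ - s)) (τ - s))‖
            ≤ ‖u' (τ - s) - g (u (τ - s)) (τ - s)‖ +
              ‖g (u (τ - s)) (τ - s) - g (v (τ - s)) (τ - s)‖ := norm_add_le _ _
          _ ≤ κ₂ + K * ‖f s‖ := by
              apply add_le_add hd1
              simpa [hf_def, hK] using hd2
      have hEs := hEone s hsIcc
      have hB'alt : B' s = c * E s + K * B s := by
        simp only [hB'_def, hB_def, hK]
        ring
      have hlt : κ₂ + K * B s < B' s := by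
        rw [hB'alt]
        have : κ₂ < c * E s := by nlinarith
        linarith
      calc ‖f' s‖ ≤ κ₂ + K * ‖f s‖ := h1
        _ = κ₂ + K * B s := by rw [hEq]
        _ < B' s := hlt
    have main := image_norm_le_of_norm_deriv_right_lt_deriv_boundary hfcont
      (fun s hs => (hfderiv s ⟨hs.1, le_of_lt hs.2⟩).hasDerivWithinAt) ha hBderiv bound
      (Set.right_mem_Icc.mpr hτ)
    have hBτ : B τ = c * τ * P := by
      have harsinh : Real.arsinh τ = Real.log (τ + Real.sqrt (τ ^ 2 + 1)) := by
        rw [add_comm (τ^2) 1, ← Real.exp_arsinh τ, Real.log_exp]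
      simp only [hB_def, hE_def, sub_self, Real.arsinh_zero, sub_zero, hPdef]
      rw [harsinh, Real.rpow_def_of_pos hbase]
      ring_nf
    have hfτ : f τ = u 0 - v 0 := by simp [hf_def]
    rw [← hfτ, ← hBτ]
    exact main
  -- pass to the limit ε → 0
  have hτP : 0 < τ * P := by positivity
  refine le_of_forall_pos_le_add ?_
  intro δ hδ
  have := key (δ / (τ * P)) (by positivity)
  calc ‖u 0 - v 0‖ ≤ (κ₂ + δ / (τ * P)) * τ * P := this
    _ = κ₂ * τ * P + δ := by field_simp
end

section
/- Let d ≥ 1, τ ≥ 0, K₁ ≥ 0, κ₂ ≥ 0. Let ε : ℝ^d × [0,τ] → ℝ^d be such that for every σ, the map x ↦ ε(x,σ) is K₁-Lipschitz, and let η : ℝ^d × [0,τ] → ℝ^d be arbitrary. Let u, v : [0,τ] → ℝ^d be differentiable with u(τ) = v(τ), u'(σ) = η(u(σ)/√(1+σ²), σ), v'(σ) = ε(v(σ)/√(1+σ²), σ), and suppose ‖η(u(σ)/√(1+σ²), σ) − ε(u(σ)/√(1+σ²), σ)‖ ≤ κ₂ for all σ ∈ [0,τ]. Then ‖u(0) −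 v(0)‖ ≤ κ₂ τ (τ + √(τ² + 1))^{K₁}. (This is the deterministic, per-example form of the DiffEdit bound of Proposition 1: since u(0) = x₀ and v(0) = D_r(E_r(x₀), Q), it bounds ‖x₀ − D_r(E_r(x₀), Q)‖.) -/
/-- Deterministic, per-example form of the DiffEdit bound (Proposition 1): if `u` and `v`
solve `u' = η(u/√(1+σ²), σ)` and `v' = ε(v/√(1+σ²), σ)` respectively on `[0,τ]` with the
same terminal point `u τ = v τ`, where `x ↦ ε(x,σ)` is `K₁`-Lipschitz and the conditional
and unconditional noise estimates differ by at most `κ₂` along the encoding trajectory,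
then `‖u 0 − v 0‖ ≤ κ₂ τ (τ + √(τ²+1))^{K₁}`. -/
theorem diffedit_per_example_bound
    (d : ℕ) (hd : 1 ≤ d) (τ K₁ κ₂ : ℝ) (hτ : 0 ≤ τ) (hK₁ : 0 ≤ K₁) (hκ₂ : 0 ≤ κ₂)
    (ε η : EuclideanSpace ℝ (Fin d) → ℝ → EuclideanSpace ℝ (Fin d))
    (hε : ∀ σ ∈ Set.Icc (0 : ℝ) τ, ∀ x y : EuclideanSpace ℝ (Fin d),
      ‖ε x σ - ε y σ‖ ≤ K₁ * ‖x - y‖)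
    (u v : ℝ → EuclideanSpace ℝ (Fin d))
    (hu : ∀ σ ∈ Set.Icc (0 : ℝ) τ,
      HasDerivAt u (η ((Real.sqrt (1 + σ ^ 2))⁻¹ • u σ) σ) σ)
    (hv : ∀ σ ∈ Set.Icc (0 : ℝ) τ,
      HasDerivAt v (ε ((Real.sqrt (1 + σ ^ 2))⁻¹ • v σ) σ) σ)
    (hend : u τ = v τ)
    (hdefect : ∀ σ ∈ Set.Icc (0 : ℝ) τ,
      ‖η ((Real.sqrt (1 + σ ^ 2))⁻¹ • u σ) σ - ε ((Real.sqrt (1 + σ ^ 2))⁻¹ • u σ) σ‖ ≤ κ₂) :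
    ‖u 0 - v 0‖ ≤ κ₂ * τ * (τ + Real.sqrt (τ ^ 2 + 1)) ^ K₁ := by
  -- time-reversed difference
  set w : ℝ → EuclideanSpace ℝ (Fin d) := fun s => u (τ - s) - v (τ - s) with hw_def
  set w' : ℝ → EuclideanSpace ℝ (Fin d) := fun s =>
    (-1 : ℝ) • η ((Real.sqrt (1 + (τ - s) ^ 2))⁻¹ • u (τ - s)) (τ - s) -
    (-1 : ℝ) • ε ((Real.sqrt (1 + (τ - s) ^ 2))⁻¹ • v (τ - s)) (τ - s) with hw'_def
  have hmem : ∀ s ∈ Set.Icc (0 : ℝ) τ, τ - s ∈ Set.Icc (0 : ℝ) τ := by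
    intro s hs; exact ⟨by linarith [hs.2], by linarith [hs.1]⟩
  have hw : ∀ s ∈ Set.Icc (0 : ℝ) τ, HasDerivAt w (w' s) s := by
    intro s hs
    have hneg : HasDerivAt (fun x : ℝ => τ - x) (-1) s := (hasDerivAt_id s).const_sub τ
    have h1 := HasDerivAt.scomp s (hu (τ - s) (hmem s hs)) hneg
    have h2 := HasDerivAt.scomp s (hv (τ - s) (hmem s hs)) hneg
    exact h1.sub h2
  have hwnorm : ∀ s, ‖w' s‖ =
      ‖η ((Real.sqrt (1 + (τ - s) ^ 2))⁻¹ • u (τ - s)) (τ - s) -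
        ε ((Real.sqrt (1 + (τ - s) ^ 2))⁻¹ • v (τ - s)) (τ - s)‖ := by
    intro s
    rw [hw'_def]
    simp only [neg_one_smul]
    rw [neg_sub_neg, norm_sub_rev]
  -- the key estimate with δ-fattened barrier
  have key : ∀ δ > (0 : ℝ),
      ‖u 0 - v 0‖ ≤ (κ₂ + δ) * (τ + δ) * Real.exp (K₁ * Real.arsinh τ) := by
    intro δ hδ
    set Φ : ℝ → ℝ := fun s => K₁ * (Real.arsinh τ - Real.arsinh (τ - s)) with hΦ_def
    set c : ℝ → ℝ := fun s => K₁ * (Real.sqrt (1 + (τ - s) ^ 2))⁻¹ with hc_def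
    set B : ℝ → ℝ := fun s => (κ₂ + δ) * (s + δ) * Real.exp (Φ s) with hB_def
    set B' : ℝ → ℝ := fun s => (κ₂ + δ) * Real.exp (Φ s) + c s * B s with hB'_def
    have hΦderiv : ∀ s, HasDerivAt Φ (c s) s := by
      intro s
      have h1 : HasDerivAt (fun x : ℝ => Real.arsinh (τ - x))
          ((Real.sqrt (1 + (τ - s) ^ 2))⁻¹ • (-1 : ℝ)) s :=
        ((hasDerivAt_id s).const_sub τ).arsinh
      have h2 := (h1.const_sub (Real.arsinh τ)).const_mul K₁
      refine h2.congr_deriv ?_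
      simp [hc_def, smul_eq_mul]
    have hBderiv : ∀ s, HasDerivAt B (B' s) s := by
      intro s
      have h1 : HasDerivAt (fun x : ℝ => (κ₂ + δ) * (x + δ)) (κ₂ + δ) s := by
        simpa using ((hasDerivAt_id s).add_const δ).const_mul (κ₂ + δ)
      have h2 : HasDerivAt (fun x => Real.exp (Φ x)) (Real.exp (Φ s) * c s) s :=
        (hΦderiv s).exp
      have := h1.mul h2
      refine this.congr_deriv ?_
      simp only [hB'_def, hB_def]
      ring
    have hΦnonneg : ∀ s ∈ Set.Ico (0 : ℝ) τ, 0 ≤ Φ s := by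
      intro s hs
      have : Real.arsinh (τ - s) ≤ Real.arsinh τ := by
        gcongr; linarith [hs.1]
      have := sub_nonneg.2 this
      exact mul_nonneg hK₁ this
    have bound : ∀ s ∈ Set.Ico (0 : ℝ) τ, ‖w s‖ = B s → ‖w' s‖ < B' s := by
      intro s hs heq
      have hsI : s ∈ Set.Icc (0 : ℝ) τ := ⟨hs.1, le_of_lt hs.2⟩
      have hσ := hmem s hsI
      set σ := τ - s with hσdef
      have hsqrt : (0 : ℝ) < Real.sqrt (1 + σ ^ 2) := by positivity
      have tri : ‖w' s‖ ≤ κ₂ + c s * ‖w s‖ := by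
        rw [hwnorm s]
        have h1 := hdefect σ hσ
        have h2 := hε σ hσ ((Real.sqrt (1 + σ ^ 2))⁻¹ • u σ) ((Real.sqrt (1 + σ ^ 2))⁻¹ • v σ)
        have h3 : ‖(Real.sqrt (1 + σ ^ 2))⁻¹ • u σ - (Real.sqrt (1 + σ ^ 2))⁻¹ • v σ‖
            = (Real.sqrt (1 + σ ^ 2))⁻¹ * ‖w s‖ := by
          rw [← smul_sub, norm_smul, Real.norm_eq_abs, abs_of_nonneg (by positivity)]
        calc ‖η ((Real.sqrt (1 + σ ^ 2))⁻¹ • u σ) σ - ε ((Real.sqrt (1 + σ ^ 2))⁻¹ • v σ) σ‖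
            ≤ ‖η ((Real.sqrt (1 + σ ^ 2))⁻¹ • u σ) σ - ε ((Real.sqrt (1 + σ ^ 2))⁻¹ • u σ) σ‖
              + ‖ε ((Real.sqrt (1 + σ ^ 2))⁻¹ • u σ) σ - ε ((Real.sqrt (1 + σ ^ 2))⁻¹ • v σ) σ‖ :=
              norm_sub_le_norm_sub_add_norm_sub _ _ _
          _ ≤ κ₂ + K₁ * ((Real.sqrt (1 + σ ^ 2))⁻¹ * ‖w s‖) := by
              rw [← h3]; exact add_le_add h1 h2
          _ = κ₂ + c s * ‖w s‖ := by rw [hc_def]; ring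
      have hexp : κ₂ + δ ≤ (κ₂ + δ) * Real.exp (Φ s) :=
        le_mul_of_one_le_right (by positivity) (Real.one_le_exp (hΦnonneg s hs))
      calc ‖w' s‖ ≤ κ₂ + c s * B s := by rw [← heq]; exact tri
        _ < (κ₂ + δ) + c s * B s := by linarith
        _ ≤ (κ₂ + δ) * Real.exp (Φ s) + c s * B s := by linarith
        _ = B' s := rfl
    have ha : ‖w 0‖ ≤ B 0 := by
      have : w 0 = 0 := by simp [hw_def, hend]
      rw [this, norm_zero, hB_def]
      positivity
    have hcont : ContinuousOn w (Set.Icc 0 τ) :=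
      fun s hs => (hw s hs).continuousAt.continuousWithinAt
    have hw' : ∀ s ∈ Set.Ico (0 : ℝ) τ, HasDerivWithinAt w (w' s) (Set.Ici s) s :=
      fun s hs => (hw s ⟨hs.1, le_of_lt hs.2⟩).hasDerivWithinAt
    have main := image_norm_le_of_norm_deriv_right_lt_deriv_boundary hcont hw' ha hBderiv
      bound (Set.right_mem_Icc.2 hτ)
    have hwτ : w τ = u 0 - v 0 := by simp [hw_def]
    have hBτ : B τ = (κ₂ + δ) * (τ + δ) * Real.exp (K₁ * Real.arsinh τ) := by
      simp [hB_def, hΦ_def, Real.arsinh_zero]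
    rw [hwτ, hBτ] at main
    exact main
  -- take δ → 0⁺
  have hE : (τ + Real.sqrt (τ ^ 2 + 1)) ^ K₁ = Real.exp (K₁ * Real.arsinh τ) := by
    have h1 : τ + Real.sqrt (τ ^ 2 + 1) = Real.exp (Real.arsinh τ) := by
      rw [Real.exp_arsinh, add_comm (τ ^ 2) 1]
    rw [h1, ← Real.exp_mul, mul_comm]
  rw [hE]
  have hlim : Filter.Tendsto (fun δ : ℝ =>
      (κ₂ + δ) * (τ + δ) * Real.exp (K₁ * Real.arsinh τ)) (nhdsWithin 0 (Set.Ioi 0))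
      (nhds (κ₂ * τ * Real.exp (K₁ * Real.arsinh τ))) := by
    have hc : Continuous fun δ : ℝ =>
        (κ₂ + δ) * (τ + δ) * Real.exp (K₁ * Real.arsinh τ) := by continuity
    have := hc.tendsto 0
    simpa using this.mono_left nhdsWithin_le_nhds
  exact ge_of_tendsto hlim (Filter.eventually_of_mem self_mem_nhdsWithin fun δ hδ => key δ hδ)
end

section
/- Let C ≥ 0, K₁ ≥ 0, and 0 ≤ K₂ < C + 1. Then there exists τ₀ > 0 such that for all τ with 0 < τ ≤ τ₀, (K₂ τ / √(τ² + 1)) · (τ + √(τ² + 1))^{K₁} < (C + 1) τ. (That is, for sufficiently small noise level τ — i.e., sufficiently small encoding ratio — the DiffEdit bound is strictly tighter than the SDEdit bound.) -/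
lemma aux_cont (K₁ K₂ : ℝ) : ContinuousAt (fun τ : ℝ => K₂ * (1 + 2 * τ) ^ K₁) 0 := by
  apply ContinuousAt.mul continuousAt_const
  exact ContinuousAt.rpow_const (by fun_prop) (Or.inl (by norm_num))

/-- For sufficiently small noise level `τ` (i.e. sufficiently small encoding ratio),
the DiffEdit bound `(K₂ τ/√(τ²+1)) (τ+√(τ²+1))^{K₁}` is strictly tighter than the
SDEdit bound `(C+1) τ`, whenever `K₂ < C + 1`. -/
theorem diffedit_bound_tighter_small_tau
    (C K₁ K₂ : ℝ) (hC : 0 ≤ C) (hK₁ : 0 ≤ K₁) (hK₂0 : 0 ≤ K₂) (hK₂ : K₂ < C + 1) :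
    ∃ τ₀ > (0 : ℝ), ∀ τ : ℝ, 0 < τ → τ ≤ τ₀ →
      K₂ * τ / Real.sqrt (τ ^ 2 + 1) * (τ + Real.sqrt (τ ^ 2 + 1)) ^ K₁
        < (C + 1) * τ := by
  have hcont := aux_cont K₁ K₂
  rw [Metric.continuousAt_iff] at hcont
  obtain ⟨δ, hδ, hd⟩ := hcont (C + 1 - K₂) (by linarith)
  refine ⟨δ / 2, by linarith, fun τ hτ hτδ => ?_⟩
  have hsq1 : (1 : ℝ) ≤ Real.sqrt (τ ^ 2 + 1) := by
    nlinarith [Real.sq_sqrt (show (0:ℝ) ≤ τ ^ 2 + 1 by positivity),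
      Real.sqrt_nonneg (τ ^ 2 + 1)]

  have hsqpos : 0 < Real.sqrt (τ ^ 2 + 1) := by linarith
  have hsqle : Real.sqrt (τ ^ 2 + 1) ≤ 1 + τ := by
    rw [show 1 + τ = Real.sqrt ((1 + τ) ^ 2) from
      (Real.sqrt_sq (by linarith)).symm]
    exact Real.sqrt_le_sqrt (by nlinarith)
  have hbase : (0:ℝ) ≤ τ + Real.sqrt (τ ^ 2 + 1) := by linarith
  have hrpow : (τ + Real.sqrt (τ ^ 2 + 1)) ^ K₁ ≤ (1 + 2 * τ) ^ K₁ :=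
    Real.rpow_le_rpow hbase (by linarith) hK₁
  have hrpos : (0:ℝ) < (τ + Real.sqrt (τ ^ 2 + 1)) ^ K₁ :=
    Real.rpow_pos_of_pos (by linarith) _
  have hg : K₂ * (1 + 2 * τ) ^ K₁ < C + 1 := by
    have := hd (x := τ) (by
      simp [Real.dist_eq, abs_of_pos hτ]; linarith)
    rw [Real.dist_eq] at this
    simp only [mul_zero, add_zero, Real.one_rpow, mul_one] at this
    have := abs_lt.mp this
    linarith [this.1, this.2]
  have step1 : K₂ * τ / Real.sqrt (τ ^ 2 + 1) * (τ + Real.sqrt (τ ^ 2 + 1)) ^ K₁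
      ≤ K₂ * τ * (1 + 2 * τ) ^ K₁ := by
    have h1 : K₂ * τ / Real.sqrt (τ ^ 2 + 1) ≤ K₂ * τ := by
      rw [div_le_iff₀ hsqpos]
      nlinarith [mul_nonneg hK₂0 hτ.le]
    have h2 : K₂ * τ * (τ + Real.sqrt (τ ^ 2 + 1)) ^ K₁
        ≤ K₂ * τ * (1 + 2 * τ) ^ K₁ := by
      apply mul_le_mul_of_nonneg_left hrpow (mul_nonneg hK₂0 hτ.le)
    calc K₂ * τ / Real.sqrt (τ ^ 2 + 1) * (τ + Real.sqrt (τ ^ 2 + 1)) ^ K₁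
        ≤ K₂ * τ * (τ + Real.sqrt (τ ^ 2 + 1)) ^ K₁ :=
          mul_le_mul_of_nonneg_right h1 hrpos.le
      _ ≤ _ := h2
  have step2 : K₂ * τ * (1 + 2 * τ) ^ K₁ < (C + 1) * τ := by
    have : K₂ * (1 + 2 * τ) ^ K₁ * τ < (C + 1) * τ :=
      mul_lt_mul_of_pos_right hg hτ
    linarith [this]
  linarith
end

section
/- Let C ≥ 0, K₂ > 0, and K₁ > 1. Then the ratio of the DiffEdit bound to the SDEdit bound, namely [(K₂ τ / √(τ² + 1)) (τ + √(τ² + 1))^{K₁}] / [(C + 1) τ] = (K₂/(C+1)) · (τ + √(τ² + 1))^{K₁} / √(τ² + 1), tends to +∞ as τ → +∞. (That is, for K₁ > 1 the asymptotic behavior of the DiffEdit bound is worse than that of the SDEdit bound.) -/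
open Filter

/-- For `K₁ > 1`, the ratio of the DiffEdit bound to the SDEdit bound,
`(K₂/(C+1)) (τ + √(τ²+1))^{K₁} / √(τ²+1)`, tends to `+∞` as `τ → +∞`:
asymptotically the DiffEdit bound is worse than the SDEdit bound. -/
theorem diffedit_bound_ratio_tendsto_atTop
    (C K₁ K₂ : ℝ) (hC : 0 ≤ C) (hK₂ : 0 < K₂) (hK₁ : 1 < K₁) :
    Tendsto
      (fun τ : ℝ =>
        K₂ / (C + 1) * (τ + Real.sqrt (τ ^ 2 + 1)) ^ K₁ / Real.sqrt (τ ^ 2 + 1))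
      atTop atTop := by
  have hc : 0 < K₂ / (C + 1) := by positivity
  have hlow : Tendsto (fun τ : ℝ => K₂ / (C + 1) / 2 * τ ^ (K₁ - 1)) atTop atTop := by
    apply Tendsto.const_mul_atTop (by positivity)
    exact tendsto_rpow_atTop (by linarith)
  refine tendsto_atTop_mono' atTop ?_ hlow
  filter_upwards [eventually_ge_atTop 1] with τ hτ
  have hτ0 : (0:ℝ) < τ := by linarith
  have hs0 : 0 < Real.sqrt (τ ^ 2 + 1) := Real.sqrt_pos.mpr (by positivity)
  have hsle : Real.sqrt (τ ^ 2 + 1) ≤ 2 * τ := by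
    have : Real.sqrt (τ ^ 2 + 1) ≤ Real.sqrt ((2 * τ) ^ 2) :=
      Real.sqrt_le_sqrt (by nlinarith)
    rwa [Real.sqrt_sq (by linarith)] at this
  have hpow : τ ^ K₁ ≤ (τ + Real.sqrt (τ ^ 2 + 1)) ^ K₁ :=
    Real.rpow_le_rpow hτ0.le (by linarith) (by linarith)
  have heq : K₂ / (C + 1) / 2 * τ ^ (K₁ - 1) = K₂ / (C + 1) * τ ^ K₁ / (2 * τ) := by
    rw [Real.rpow_sub hτ0, Real.rpow_one]
    field_simp
  rw [heq]
  apply div_le_div₀ (by positivity) (by nlinarith) hs0 hsle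
end
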